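/- Let a, b, c, d, γ > 0 and δ > 1 be real numbers with c/a + d/b = γ. Then the double integral ∫₀^∞ ∫₀^∞ (1 + x^a + y^b)^(−γ) (1 + log(1 + x^a + y^b))^(−δ) x^(c−1) y^(d−1) dx dy is finite. -/

import Mathlib

open Real MeasureTheory Set

lemma contOn_base (b γ d : ℝ) (hb : 0 < b) :
    ContinuousOn (fun z : ℝ => (1 + z ^ b) ^ (-γ) * z ^ (d - 1)) (Ioi 0) := by
  have h1 : ContinuousOn (fun z : ℝ => 1 + z ^ b) (Ioi 0) := by
    exact continuousOn_const.add (continuousOn_id.rpow_const fun z hz => Or.inl (ne_of_gt hz))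
  have h2 : ContinuousOn (fun z : ℝ => (1 + z ^ b) ^ (-γ)) (Ioi 0) := by
    refine h1.rpow_const fun z hz => Or.inl (ne_of_gt ?_)
    have : (0:ℝ) ≤ z ^ b := rpow_nonneg (le_of_lt hz) b
    linarith
  exact h2.mul (continuousOn_id.rpow_const fun z hz => Or.inl (ne_of_gt hz))

lemma aux_base (b γ d : ℝ) (hb : 0 < b) (hd : 0 < d) (hq : d / b < γ) :
    IntegrableOn (fun z : ℝ => (1 + z ^ b) ^ (-γ) * z ^ (d - 1)) (Ioi 0) := by
  have hmeas : AEStronglyMeasurable (fun z : ℝ => (1 + z ^ b) ^ (-γ) * z ^ (d - 1)) (volume.restrict (Ioi 0)) := (contOn_base b γ d hb).aestronglyMeasurable measurableSet_Ioi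
  have hγ : 0 < γ := lt_trans (div_pos hd hb) hq
  have key : ∀ z ∈ Ioi (0:ℝ), 0 ≤ (1 + z ^ b) ^ (-γ) * z ^ (d - 1) := by
    intro z hz
    have hz0 : (0:ℝ) < z := hz
    have : (0:ℝ) ≤ z ^ b := rpow_nonneg hz0.le b
    positivity
  rw [show Ioi (0:ℝ) = Ioc 0 1 ∪ Ioi 1 by rw [Ioc_union_Ioi_eq_Ioi]; norm_num]
  refine IntegrableOn.union ?_ ?_
  · -- on (0,1]: bound by z^(d-1)
    have hZ : IntegrableOn (fun z : ℝ => z ^ (d - 1)) (Ioc (0:ℝ) 1) := by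
      have := intervalIntegral.intervalIntegrable_rpow' (a := 0) (b := 1) (r := d - 1) (by linarith)
      simpa [intervalIntegrable_iff, uIoc_of_le (zero_le_one' ℝ)] using this
    refine hZ.mono' (hmeas.mono_measure (Measure.restrict_mono (Ioc_subset_Ioi_self) le_rfl)) ?_
    filter_upwards [ae_restrict_mem measurableSet_Ioc] with z hz
    have hz0 : (0:ℝ) < z := hz.1
    have h1 : (0:ℝ) ≤ z ^ b := rpow_nonneg hz0.le b
    rw [Real.norm_eq_abs, abs_of_nonneg (key z hz0)]
    have hle : (1 + z ^ b) ^ (-γ) ≤ 1 := by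
      apply Real.rpow_le_one_of_one_le_of_nonpos (by linarith) (by linarith)
    calc (1 + z ^ b) ^ (-γ) * z ^ (d - 1) ≤ 1 * z ^ (d - 1) := by
          apply mul_le_mul_of_nonneg_right hle (rpow_nonneg hz0.le _)
      _ = z ^ (d - 1) := one_mul _
  · -- on (1,∞): bound by z^(d-1-b*γ)
    have hZ : IntegrableOn (fun z : ℝ => z ^ (d - 1 - b * γ)) (Ioi (1:ℝ)) := by
      apply integrableOn_Ioi_rpow_of_lt _ one_pos
      have : d < b * γ := by
        have := (div_lt_iff₀ hb).mp hq
        linarith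
      linarith
    refine hZ.mono' (hmeas.mono_measure (Measure.restrict_mono (Ioi_subset_Ioi zero_le_one) le_rfl)) ?_
    filter_upwards [ae_restrict_mem measurableSet_Ioi] with z hz
    have hz1 : (1:ℝ) < z := hz
    have hz0 : (0:ℝ) < z := by linarith
    have hzb : (0:ℝ) < z ^ b := rpow_pos_of_pos hz0 b
    rw [Real.norm_eq_abs, abs_of_nonneg (key z hz0)]
    have hle : (1 + z ^ b) ^ (-γ) ≤ (z ^ b) ^ (-γ) :=
      rpow_le_rpow_of_nonpos hzb (by linarith) (by linarith)
    calc (1 + z ^ b) ^ (-γ) * z ^ (d - 1)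
        ≤ (z ^ b) ^ (-γ) * z ^ (d - 1) :=
          mul_le_mul_of_nonneg_right hle (rpow_nonneg hz0.le _)
      _ = z ^ (d - 1 - b * γ) := by
          rw [← rpow_mul hz0.le, ← rpow_add hz0]
          ring_nf

lemma aux_scaled (b γ d T : ℝ) (hb : 0 < b) (hd : 0 < d) (hq : d / b < γ) (hT : 0 < T) :
    IntegrableOn (fun y : ℝ => (T + y ^ b) ^ (-γ) * y ^ (d - 1)) (Ioi 0) ∧
      ∫ y in Ioi (0:ℝ), (T + y ^ b) ^ (-γ) * y ^ (d - 1) =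
        T ^ (d / b - γ) * ∫ z in Ioi (0:ℝ), (1 + z ^ b) ^ (-γ) * z ^ (d - 1) := by
  set σ : ℝ := T ^ (1 / b) with hσdef
  have hσ : 0 < σ := rpow_pos_of_pos hT _
  have hσb : σ ^ b = T := by
    rw [hσdef, ← rpow_mul hT.le, one_div_mul_cancel (ne_of_gt hb), rpow_one]
  set F : ℝ → ℝ := fun z => (1 + z ^ b) ^ (-γ) * z ^ (d - 1) with hF
  have hkey : ∀ y ∈ Ioi (0:ℝ),
      (T + y ^ b) ^ (-γ) * y ^ (d - 1) = T ^ (-γ) * σ ^ (d - 1) * F (σ⁻¹ * y) := by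
    intro y hy
    have hy0 : (0:ℝ) < y := hy
    have hyb : (0:ℝ) ≤ y ^ b := rpow_nonneg hy0.le b
    have h1 : (σ⁻¹ * y) ^ b = T⁻¹ * y ^ b := by
      rw [mul_rpow (inv_nonneg.mpr hσ.le) hy0.le, ← hσb, inv_rpow hσ.le]
    have h2 : (1 : ℝ) + (σ⁻¹ * y) ^ b = T⁻¹ * (T + y ^ b) := by
      rw [h1, mul_add, inv_mul_cancel₀ (ne_of_gt hT)]
    have h3 : ((1 : ℝ) + (σ⁻¹ * y) ^ b) ^ (-γ) = T ^ γ * (T + y ^ b) ^ (-γ) := by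
      rw [h2, mul_rpow (inv_nonneg.mpr hT.le) (by linarith), ← rpow_neg_one T,
        ← rpow_mul hT.le]
      ring_nf
    have h4 : (σ⁻¹ * y) ^ (d - 1) = σ ^ (1 - d) * y ^ (d - 1) := by
      rw [mul_rpow (inv_nonneg.mpr hσ.le) hy0.le, ← rpow_neg_one σ, ← rpow_mul hσ.le]
      ring_nf
    simp only [hF, h3, h4]
    have h5 : σ ^ (d-1) * σ ^ (1-d) = 1 := by rw [← rpow_add hσ]; norm_num
    have h6 : T ^ (-γ) * T ^ γ = 1 := by rw [← rpow_add hT]; norm_num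
    calc (T + y ^ b) ^ (-γ) * y ^ (d - 1)
        = (T ^ (-γ) * T ^ γ) * (σ ^ (d-1) * σ ^ (1-d)) * ((T + y ^ b) ^ (-γ) * y ^ (d - 1)) := by
          rw [h5, h6]; ring
      _ = T ^ (-γ) * σ ^ (d - 1) * (T ^ γ * (T + y ^ b) ^ (-γ) * (σ ^ (1 - d) * y ^ (d - 1))) := by
          ring
  -- now integrability and integral value
  have hbase := aux_base b γ d hb hd hq
  have hcomp : IntegrableOn (fun y : ℝ => T ^ (-γ) * σ ^ (d - 1) * F (σ⁻¹ * y)) (Ioi 0) := by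
    have := (integrableOn_Ioi_comp_mul_left_iff F 0 (inv_pos.mpr hσ)).mpr (by simpa using hbase)
    simpa [IntegrableOn] using this.const_mul (T ^ (-γ) * σ ^ (d - 1))
  have hint : IntegrableOn (fun y : ℝ => (T + y ^ b) ^ (-γ) * y ^ (d - 1)) (Ioi 0) :=
    (integrableOn_congr_fun hkey measurableSet_Ioi).mpr hcomp
  refine ⟨hint, ?_⟩
  rw [setIntegral_congr_fun measurableSet_Ioi hkey]
  rw [integral_const_mul, integral_comp_mul_left_Ioi F 0 (inv_pos.mpr hσ)]
  simp only [mul_zero, inv_inv, smul_eq_mul]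
  have hσd : T ^ (-γ) * (σ ^ (d - 1) * σ) = T ^ (d / b - γ) := by
    nth_rewrite 2 [← rpow_one σ]
    rw [← rpow_add hσ, hσdef, ← rpow_mul hT.le, ← rpow_add hT]
    congr 1
    field_simp
    ring
  rw [← hσd]
  ring

lemma aux_log (δ : ℝ) (hδ : 1 < δ) :
    IntegrableOn (fun x : ℝ => x⁻¹ * (1 + Real.log x) ^ (-δ)) (Ioi 1) := by
  have hderiv : ∀ x ∈ Ici (1:ℝ), HasDerivAt (fun x : ℝ => (1 - δ)⁻¹ * (1 + Real.log x) ^ (1 - δ))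
      (x⁻¹ * (1 + Real.log x) ^ (-δ)) x := by
    intro x hx
    have hx0 : (0:ℝ) < x := lt_of_lt_of_le one_pos hx
    have hlog : 0 ≤ Real.log x := Real.log_nonneg hx
    have h1 : HasDerivAt (fun x : ℝ => 1 + Real.log x) x⁻¹ x := by
      simpa using (Real.hasDerivAt_log (ne_of_gt hx0)).const_add 1
    have h2 := h1.rpow_const (p := 1 - δ) (Or.inl (by positivity))
    have h3 := h2.const_mul (1 - δ)⁻¹
    refine h3.congr_deriv ?_
    have hne : (1:ℝ) - δ ≠ 0 := by linarith
    rw [show (1:ℝ) - δ - 1 = -δ by ring]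
    field_simp
  have hpos : ∀ x ∈ Ioi (1:ℝ), 0 ≤ x⁻¹ * (1 + Real.log x) ^ (-δ) := by
    intro x hx
    have hx0 : (0:ℝ) < x := lt_trans one_pos hx
    have hlog : 0 ≤ Real.log x := Real.log_nonneg (le_of_lt hx)
    positivity
  have htend : Filter.Tendsto (fun x : ℝ => (1 - δ)⁻¹ * (1 + Real.log x) ^ (1 - δ))
      Filter.atTop (nhds ((1 - δ)⁻¹ * 0)) := by
    apply Filter.Tendsto.const_mul
    have h1 : Filter.Tendsto (fun x : ℝ => 1 + Real.log x) Filter.atTop Filter.atTop :=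
      Filter.tendsto_atTop_add_const_left _ 1 Real.tendsto_log_atTop
    have := (tendsto_rpow_neg_atTop (y := δ - 1) (by linarith)).comp h1
    refine this.congr (fun x => ?_)
    simp [Function.comp, neg_sub]
  exact integrableOn_Ioi_deriv_of_nonneg' hderiv hpos htend

lemma contOn_outer (a c δ : ℝ) (ha : 0 < a) :
    ContinuousOn (fun x : ℝ => x ^ (c - 1) * (1 + x ^ a) ^ (-(c / a)) *
      (1 + Real.log (1 + x ^ a)) ^ (-δ)) (Ioi 0) := by
  have hbase : ∀ x ∈ Ioi (0:ℝ), (0:ℝ) < 1 + x ^ a := by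
    intro x hx
    have : (0:ℝ) ≤ x ^ a := rpow_nonneg (le_of_lt hx) a
    linarith
  have h1 : ContinuousOn (fun x : ℝ => 1 + x ^ a) (Ioi 0) :=
    continuousOn_const.add (continuousOn_id.rpow_const fun x hx => Or.inl (ne_of_gt hx))
  have hlogpos : ∀ x ∈ Ioi (0:ℝ), (0:ℝ) < 1 + Real.log (1 + x ^ a) := by
    intro x hx
    have h2 : (1:ℝ) ≤ 1 + x ^ a := by
      have : (0:ℝ) ≤ x ^ a := rpow_nonneg (le_of_lt hx) a
      linarith
    have := Real.log_nonneg h2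
    linarith
  refine ContinuousOn.mul (ContinuousOn.mul ?_ ?_) ?_
  · exact continuousOn_id.rpow_const fun x hx => Or.inl (ne_of_gt hx)
  · exact h1.rpow_const fun x hx => Or.inl (ne_of_gt (hbase x hx))
  · refine ContinuousOn.rpow_const ?_ fun x hx => Or.inl (ne_of_gt (hlogpos x hx))
    exact continuousOn_const.add (h1.log fun x hx => ne_of_gt (hbase x hx))

lemma aux_outer (a c δ : ℝ) (ha : 0 < a) (hc : 0 < c) (hδ : 1 < δ) :
    IntegrableOn (fun x : ℝ => x ^ (c - 1) * (1 + x ^ a) ^ (-(c / a)) *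
      (1 + Real.log (1 + x ^ a)) ^ (-δ)) (Ioi 0) := by
  have hmeas : AEStronglyMeasurable (fun x : ℝ => x ^ (c - 1) * (1 + x ^ a) ^ (-(c / a)) *
      (1 + Real.log (1 + x ^ a)) ^ (-δ)) (volume.restrict (Ioi 0)) :=
    (contOn_outer a c δ ha).aestronglyMeasurable measurableSet_Ioi
  have hnn : ∀ x ∈ Ioi (0:ℝ), 0 ≤ x ^ (c - 1) * (1 + x ^ a) ^ (-(c / a)) *
      (1 + Real.log (1 + x ^ a)) ^ (-δ) := by
    intro x hx
    have hx0 : (0:ℝ) < x := hx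
    have h1 : (0:ℝ) ≤ x ^ a := rpow_nonneg hx0.le a
    have h2 : (0:ℝ) < 1 + x ^ a := by linarith
    have h3 : (0:ℝ) ≤ Real.log (1 + x ^ a) := Real.log_nonneg (by linarith)
    positivity
  rw [show Ioi (0:ℝ) = Ioc 0 1 ∪ Ioi 1 by rw [Ioc_union_Ioi_eq_Ioi]; norm_num]
  refine IntegrableOn.union ?_ ?_
  · have hZ : IntegrableOn (fun x : ℝ => x ^ (c - 1)) (Ioc (0:ℝ) 1) := by
      have := intervalIntegral.intervalIntegrable_rpow' (a := 0) (b := 1) (r := c - 1)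
        (by linarith)
      simpa [intervalIntegrable_iff, uIoc_of_le (zero_le_one' ℝ)] using this
    refine hZ.mono' (hmeas.mono_measure (Measure.restrict_mono Ioc_subset_Ioi_self le_rfl)) ?_
    filter_upwards [ae_restrict_mem measurableSet_Ioc] with x hx
    have hx0 : (0:ℝ) < x := hx.1
    have h1 : (0:ℝ) ≤ x ^ a := rpow_nonneg hx0.le a
    have h3 : (0:ℝ) ≤ Real.log (1 + x ^ a) := Real.log_nonneg (by linarith)
    rw [Real.norm_eq_abs, abs_of_nonneg (hnn x hx0)]
    have e1 : (1 + x ^ a) ^ (-(c / a)) ≤ 1 :=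
      Real.rpow_le_one_of_one_le_of_nonpos (by linarith)
        (by have := div_pos hc ha; linarith)
    have e2 : (1 + Real.log (1 + x ^ a)) ^ (-δ) ≤ 1 :=
      Real.rpow_le_one_of_one_le_of_nonpos (by linarith) (by linarith)
    calc x ^ (c - 1) * (1 + x ^ a) ^ (-(c / a)) * (1 + Real.log (1 + x ^ a)) ^ (-δ)
        ≤ x ^ (c - 1) * 1 * 1 := by
          apply mul_le_mul (mul_le_mul le_rfl e1 (by positivity) (rpow_nonneg hx0.le _)) e2
            (by positivity)
          positivity
      _ = x ^ (c - 1) := by ring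
  · set m : ℝ := min a 1 with hm
    have hm0 : 0 < m := lt_min ha one_pos
    have hZ : IntegrableOn (fun x : ℝ => m ^ (-δ) * (x⁻¹ * (1 + Real.log x) ^ (-δ)))
        (Ioi (1:ℝ)) := (aux_log δ hδ).const_mul _
    refine hZ.mono' (hmeas.mono_measure (Measure.restrict_mono (Ioi_subset_Ioi zero_le_one)
      le_rfl)) ?_
    filter_upwards [ae_restrict_mem measurableSet_Ioi] with x hx
    have hx1 : (1:ℝ) < x := hx
    have hx0 : (0:ℝ) < x := lt_trans one_pos hx1
    have hxa : (0:ℝ) < x ^ a := rpow_pos_of_pos hx0 a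
    have hlx : (0:ℝ) ≤ Real.log x := Real.log_nonneg hx1.le
    have h3 : (0:ℝ) ≤ Real.log (1 + x ^ a) := Real.log_nonneg (by linarith)
    rw [Real.norm_eq_abs, abs_of_nonneg (hnn x hx0)]
    -- power part
    have e1 : x ^ (c - 1) * (1 + x ^ a) ^ (-(c / a)) ≤ x⁻¹ := by
      have h4 : (1 + x ^ a) ^ (-(c / a)) ≤ (x ^ a) ^ (-(c / a)) :=
        rpow_le_rpow_of_nonpos hxa (by linarith)
          (by have := div_pos hc ha; linarith)
      have h5 : (x ^ a) ^ (-(c / a)) = x ^ (-c) := by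
        rw [← rpow_mul hx0.le]
        congr 1
        field_simp
      calc x ^ (c - 1) * (1 + x ^ a) ^ (-(c / a)) ≤ x ^ (c - 1) * x ^ (-c) := by
            rw [← h5]; exact mul_le_mul_of_nonneg_left h4 (rpow_nonneg hx0.le _)
        _ = x⁻¹ := by
            rw [← rpow_add hx0, show c - 1 + -c = -1 by ring, rpow_neg_one]
    -- log part
    have e2 : (1 + Real.log (1 + x ^ a)) ^ (-δ) ≤ m ^ (-δ) * (1 + Real.log x) ^ (-δ) := by
      have ha1 : Real.log (x ^ a) ≤ Real.log (1 + x ^ a) :=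
        Real.log_le_log hxa (by linarith)
      have ha2 : Real.log (x ^ a) = a * Real.log x := Real.log_rpow hx0 a
      have hmle : m * (1 + Real.log x) ≤ 1 + Real.log (1 + x ^ a) := by
        have hm1 : m ≤ 1 := min_le_right a 1
        have hma : m ≤ a := min_le_left a 1
        have : m * (1 + Real.log x) = m + m * Real.log x := by ring
        rw [this]
        have : m * Real.log x ≤ a * Real.log x := mul_le_mul_of_nonneg_right hma hlx
        nlinarith
      have := rpow_le_rpow_of_nonpos (by positivity) hmle (by linarith : -δ ≤ 0)
      calc (1 + Real.log (1 + x ^ a)) ^ (-δ) ≤ (m * (1 + Real.log x)) ^ (-δ) := this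
        _ = m ^ (-δ) * (1 + Real.log x) ^ (-δ) := mul_rpow hm0.le (by linarith)
    calc x ^ (c - 1) * (1 + x ^ a) ^ (-(c / a)) * (1 + Real.log (1 + x ^ a)) ^ (-δ)
        ≤ x⁻¹ * (m ^ (-δ) * (1 + Real.log x) ^ (-δ)) := by
          apply mul_le_mul e1 e2 (by positivity)
          positivity
      _ = m ^ (-δ) * (x⁻¹ * (1 + Real.log x) ^ (-δ)) := by ring

lemma contOn_main (a b c d γ δ : ℝ) :
    ContinuousOn (fun z : ℝ × ℝ =>
        (1 + z.1 ^ a + z.2 ^ b) ^ (-γ) *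
          (1 + Real.log (1 + z.1 ^ a + z.2 ^ b)) ^ (-δ) *
          z.1 ^ (c - 1) * z.2 ^ (d - 1)) (Ioi (0:ℝ) ×ˢ Ioi (0:ℝ)) := by
  have hS : ∀ z ∈ Ioi (0:ℝ) ×ˢ Ioi (0:ℝ), (0:ℝ) < 1 + z.1 ^ a + z.2 ^ b := by
    rintro ⟨x, y⟩ ⟨hx, hy⟩
    have h1 : (0:ℝ) ≤ x ^ a := rpow_nonneg (le_of_lt hx) a
    have h2 : (0:ℝ) ≤ y ^ b := rpow_nonneg (le_of_lt hy) b
    simp only at *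
    linarith
  have hSc : ContinuousOn (fun z : ℝ × ℝ => 1 + z.1 ^ a + z.2 ^ b)
      (Ioi (0:ℝ) ×ˢ Ioi (0:ℝ)) := by
    refine ContinuousOn.add (continuousOn_const.add ?_) ?_
    · exact (continuous_fst.continuousOn).rpow_const
        fun z hz => Or.inl (ne_of_gt hz.1)
    · exact (continuous_snd.continuousOn).rpow_const
        fun z hz => Or.inl (ne_of_gt hz.2)
  have hLpos : ∀ z ∈ Ioi (0:ℝ) ×ˢ Ioi (0:ℝ),
      (0:ℝ) < 1 + Real.log (1 + z.1 ^ a + z.2 ^ b) := by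
    rintro ⟨x, y⟩ ⟨hx, hy⟩
    have h1 : (0:ℝ) ≤ x ^ a := rpow_nonneg (le_of_lt hx) a
    have h2 : (0:ℝ) ≤ y ^ b := rpow_nonneg (le_of_lt hy) b
    have : (0:ℝ) ≤ Real.log (1 + x ^ a + y ^ b) := Real.log_nonneg (by linarith)
    simp only at *
    linarith
  refine ContinuousOn.mul (ContinuousOn.mul (ContinuousOn.mul ?_ ?_) ?_) ?_
  · exact hSc.rpow_const fun z hz => Or.inl (ne_of_gt (hS z hz))
  · refine ContinuousOn.rpow_const ?_ fun z hz => Or.inl (ne_of_gt (hLpos z hz))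
    exact continuousOn_const.add (hSc.log fun z hz => ne_of_gt (hS z hz))
  · exact (continuous_fst.continuousOn).rpow_const fun z hz => Or.inl (ne_of_gt hz.1)
  · exact (continuous_snd.continuousOn).rpow_const fun z hz => Or.inl (ne_of_gt hz.2)

/-- if `a,b,c,d,γ > 0`, `δ > 1` and `c/a + d/b = γ`, then
`∫₀^∞∫₀^∞ (1+x^a+y^b)^(-γ) (1+log(1+x^a+y^b))^(-δ) x^(c-1) y^(d-1) dx dy < ∞`. -/
theorem integrable_rpow_log_double (a b c d γ δ : ℝ) (ha : 0 < a) (hb : 0 < b)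
    (hc : 0 < c) (hd : 0 < d) (hγ : 0 < γ) (hδ : 1 < δ) (h : c / a + d / b = γ) :
    IntegrableOn
      (fun z : ℝ × ℝ =>
        (1 + z.1 ^ a + z.2 ^ b) ^ (-γ) *
          (1 + Real.log (1 + z.1 ^ a + z.2 ^ b)) ^ (-δ) *
          z.1 ^ (c - 1) * z.2 ^ (d - 1))
      (Ioi (0:ℝ) ×ˢ Ioi (0:ℝ)) := by
  have hca : 0 < c / a := div_pos hc ha
  have hdb : 0 < d / b := div_pos hd hb
  have hq : d / b < γ := by linarith
  set f : ℝ × ℝ → ℝ := fun z =>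
    (1 + z.1 ^ a + z.2 ^ b) ^ (-γ) *
      (1 + Real.log (1 + z.1 ^ a + z.2 ^ b)) ^ (-δ) *
      z.1 ^ (c - 1) * z.2 ^ (d - 1) with hf
  set K : ℝ := ∫ z in Ioi (0:ℝ), (1 + z ^ b) ^ (-γ) * z ^ (d - 1) with hK
  have hK0 : 0 ≤ K := by
    apply setIntegral_nonneg measurableSet_Ioi
    intro z hz
    have h1 : (0:ℝ) ≤ z ^ b := rpow_nonneg (le_of_lt hz) b
    have h2 : (0:ℝ) < z := hz
    positivity
  have hmeas : AEStronglyMeasurable f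
      ((volume.restrict (Ioi (0:ℝ))).prod (volume.restrict (Ioi (0:ℝ)))) := by
    rw [Measure.prod_restrict]
    exact (contOn_main a b c d γ δ).aestronglyMeasurable
      (measurableSet_Ioi.prod measurableSet_Ioi)
  rw [IntegrableOn, Measure.volume_eq_prod, ← Measure.prod_restrict]
  rw [integrable_prod_iff hmeas]
  -- basic facts for fixed x
  have sect : ∀ x : ℝ, 0 < x → ∀ y : ℝ, 0 < y →
      0 ≤ f (x, y) ∧
      f (x, y) ≤ ((1 + x ^ a) + y ^ b) ^ (-γ) * (1 + Real.log (1 + x ^ a)) ^ (-δ) *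
        x ^ (c - 1) * y ^ (d - 1) := by
    intro x hx y hy
    have h1 : (0:ℝ) ≤ x ^ a := rpow_nonneg hx.le a
    have h2 : (0:ℝ) ≤ y ^ b := rpow_nonneg hy.le b
    have hT : (1:ℝ) ≤ 1 + x ^ a := by linarith
    have hS : (1:ℝ) ≤ 1 + x ^ a + y ^ b := by linarith
    have hlogS : (0:ℝ) ≤ Real.log (1 + x ^ a + y ^ b) := Real.log_nonneg hS
    have hlogT : (0:ℝ) ≤ Real.log (1 + x ^ a) := Real.log_nonneg hT
    constructor
    · simp only [hf]
      positivity
    · have hmono : (1 + Real.log (1 + x ^ a + y ^ b)) ^ (-δ) ≤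
          (1 + Real.log (1 + x ^ a)) ^ (-δ) := by
        have hll := Real.log_le_log (by linarith : (0:ℝ) < 1 + x ^ a) (by linarith :
          (1:ℝ) + x ^ a ≤ 1 + x ^ a + y ^ b)
        exact rpow_le_rpow_of_nonpos (by linarith) (by linarith) (by linarith)
      simp only [hf]
      have hnn1 : (0:ℝ) ≤ (1 + x ^ a + y ^ b) ^ (-γ) := rpow_nonneg (by linarith) _
      have hnn2 : (0:ℝ) ≤ x ^ (c - 1) := rpow_nonneg hx.le _
      have hnn3 : (0:ℝ) ≤ y ^ (d - 1) := rpow_nonneg hy.le _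
      calc (1 + x ^ a + y ^ b) ^ (-γ) * (1 + Real.log (1 + x ^ a + y ^ b)) ^ (-δ) *
            x ^ (c - 1) * y ^ (d - 1)
          ≤ (1 + x ^ a + y ^ b) ^ (-γ) * (1 + Real.log (1 + x ^ a)) ^ (-δ) *
            x ^ (c - 1) * y ^ (d - 1) := by
            apply mul_le_mul_of_nonneg_right _ hnn3
            apply mul_le_mul_of_nonneg_right _ hnn2
            exact mul_le_mul_of_nonneg_left hmono hnn1
        _ = ((1 + x ^ a) + y ^ b) ^ (-γ) * (1 + Real.log (1 + x ^ a)) ^ (-δ) *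
            x ^ (c - 1) * y ^ (d - 1) := by ring_nf
  -- section integrability for fixed x
  have hsec : ∀ x : ℝ, 0 < x →
      IntegrableOn (fun y => f (x, y)) (Ioi (0:ℝ)) := by
    intro x hx
    have h1 : (0:ℝ) ≤ x ^ a := rpow_nonneg hx.le a
    have hT : (0:ℝ) < 1 + x ^ a := by linarith
    have hsc := (aux_scaled b γ d (1 + x ^ a) hb hd hq hT).1
    have hg : IntegrableOn
        (fun y : ℝ => ((1 + Real.log (1 + x ^ a)) ^ (-δ) * x ^ (c - 1)) *
          (((1 + x ^ a) + y ^ b) ^ (-γ) * y ^ (d - 1))) (Ioi 0) := hsc.const_mul _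
    refine hg.mono' ?_ ?_
    · have : ContinuousOn (fun y => f (x, y)) (Ioi 0) := by
        refine (contOn_main a b c d γ δ).comp
          (Continuous.continuousOn (Continuous.prodMk_right x)) ?_
        intro y hy
        exact ⟨hx, hy⟩
      exact this.aestronglyMeasurable measurableSet_Ioi
    · filter_upwards [ae_restrict_mem measurableSet_Ioi] with y hy
      obtain ⟨hnn, hle⟩ := sect x hx y hy
      rw [Real.norm_eq_abs, abs_of_nonneg hnn]
      calc f (x, y) ≤ ((1 + x ^ a) + y ^ b) ^ (-γ) * (1 + Real.log (1 + x ^ a)) ^ (-δ) *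
            x ^ (c - 1) * y ^ (d - 1) := hle
        _ = ((1 + Real.log (1 + x ^ a)) ^ (-δ) * x ^ (c - 1)) *
            (((1 + x ^ a) + y ^ b) ^ (-γ) * y ^ (d - 1)) := by ring
  constructor
  · filter_upwards [ae_restrict_mem measurableSet_Ioi] with x hx
    exact hsec x hx
  · -- integrability of the integral of norms
    refine Integrable.mono' (g := fun x => K *
        (x ^ (c - 1) * (1 + x ^ a) ^ (-(c / a)) * (1 + Real.log (1 + x ^ a)) ^ (-δ)))
      (((aux_outer a c δ ha hc hδ).const_mul K)) (hmeas.norm.integral_prod_right') ?_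
    filter_upwards [ae_restrict_mem measurableSet_Ioi] with x hx
    have h1 : (0:ℝ) ≤ x ^ a := rpow_nonneg (le_of_lt hx) a
    have hT : (0:ℝ) < 1 + x ^ a := by linarith
    obtain ⟨hint, hval⟩ := aux_scaled b γ d (1 + x ^ a) hb hd hq hT
    have hfsec := hsec x hx
    have hlogT : (0:ℝ) ≤ Real.log (1 + x ^ a) := Real.log_nonneg (by linarith)
    have hle : (∫ y in Ioi (0:ℝ), ‖f (x, y)‖) ≤
        ∫ y in Ioi (0:ℝ), ((1 + Real.log (1 + x ^ a)) ^ (-δ) * x ^ (c - 1)) *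
          (((1 + x ^ a) + y ^ b) ^ (-γ) * y ^ (d - 1)) := by
      apply setIntegral_mono_on hfsec.norm (hint.const_mul _) measurableSet_Ioi
      intro y hy
      obtain ⟨hnn, hb2⟩ := sect x hx y hy
      rw [Real.norm_eq_abs, abs_of_nonneg hnn]
      refine le_trans hb2 (le_of_eq ?_)
      ring
    have hval2 : (∫ y in Ioi (0:ℝ), ((1 + Real.log (1 + x ^ a)) ^ (-δ) * x ^ (c - 1)) *
          (((1 + x ^ a) + y ^ b) ^ (-γ) * y ^ (d - 1)))
        = ((1 + Real.log (1 + x ^ a)) ^ (-δ) * x ^ (c - 1)) *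
          ((1 + x ^ a) ^ (d / b - γ) * K) := by
      rw [integral_const_mul, hval]
    have he : d / b - γ = -(c / a) := by linarith
    rw [Real.norm_eq_abs, abs_of_nonneg (integral_nonneg fun y => norm_nonneg _)]
    refine le_trans hle (le_of_eq ?_)
    rw [hval2, he]
    ring
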